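/- Let A ⊆ ℝⁿ be nonempty and closed, x ∈ A, and v ∈ ℝⁿ. If the set T = {t > 0 : x + t v ∈ Unp(A) and the unique nearest point of x + t v in A is x} is nonempty and bounded above with supremum τ, then x + τ v does not belong to the interior of Unp(A). -/
import Mathlib


open Metric
open scoped RealInnerProductSpace

/-- `Unp A` is the set of points having a unique nearest point in `A`. -/
def Unp {n : ℕ} (A : Set (EuclideanSpace ℝ (Fin n))) : Set (EuclideanSpace ℝ (Fin n)) :=
  {x | ∃! a, a ∈ A ∧ dist x a = Metric.infDist x A}

open Set Filter
open scoped Topology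

lemma slope_aux {n : ℕ} {A : Set (EuclideanSpace ℝ (Fin n))} (hA : A.Nonempty) (hAc : IsClosed A)
    {z a : EuclideanSpace ℝ (Fin n)} (hzU : z ∈ Unp A) (ha : a ∈ A)
    (had : dist z a = Metric.infDist z A) (hpos : 0 < Metric.infDist z A) {ε : ℝ} (hε : 0 < ε) :
    ∃ h₀ > 0, ∀ h : ℝ, 0 < h → h < h₀ →
      Metric.infDist z A + h * (1 - ε) ≤
        Metric.infDist (z + h • ((Metric.infDist z A)⁻¹ • (z - a))) A := by
  set δ := Metric.infDist z A with hδ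
  set u : EuclideanSpace ℝ (Fin n) := δ⁻¹ • (z - a) with hu
  have hza : ‖z - a‖ = δ := by rw [← dist_eq_norm]; exact had
  have hzane : z - a ≠ 0 := by
    intro h; rw [h, norm_zero] at hza; exact hpos.ne hza
  have hunorm : ‖u‖ = 1 := by
    rw [hu, norm_smul, hza, Real.norm_eq_abs, abs_inv, abs_of_pos hpos, inv_mul_cancel₀ hpos.ne']
  by_contra hcon
  push_neg at hcon
  -- extract a bad sequence
  have hseq : ∀ k : ℕ, ∃ h : ℝ, 0 < h ∧ h < 1/(k+1) ∧
      Metric.infDist (z + h • u) A < δ + h * (1 - ε) := by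
    intro k
    obtain ⟨h, h1, h2, h3⟩ := hcon (1/(k+1)) (by positivity)
    exact ⟨h, h1, h2, h3⟩
  choose h h0 hlt hbad using hseq
  have hh0 : Filter.Tendsto h Filter.atTop (nhds 0) := by
    apply squeeze_zero (fun k => (h0 k).le) (fun k => (hlt k).le)
    exact tendsto_one_div_add_atTop_nhds_zero_nat
  -- feet of z + h k • u
  have hfoot : ∀ k : ℕ, ∃ b ∈ A, Metric.infDist (z + h k • u) A = dist (z + h k • u) b :=
    fun k => hAc.exists_infDist_eq_dist hA _
  choose b hbA hbd using hfoot
  have hlip : ∀ k, Metric.infDist (z + h k • u) A ≤ δ + h k := by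
    intro k
    calc Metric.infDist (z + h k • u) A ≤ Metric.infDist z A + dist (z + h k • u) z :=
          Metric.infDist_le_infDist_add_dist
      _ = δ + h k := by
          rw [← hδ, dist_eq_norm, add_sub_cancel_left, norm_smul, hunorm, mul_one,
            Real.norm_eq_abs, abs_of_pos (h0 k)]
  have hlb : ∀ k, δ ≤ dist z (b k) := fun k => had ▸ (by
    rw [had]; exact Metric.infDist_le_dist_of_mem (hbA k))
  have hub : ∀ k, dist z (b k) ≤ δ + 2 * h k := by
    intro k
    calc dist z (b k) ≤ dist z (z + h k • u) + dist (z + h k • u) (b k) := dist_triangle _ _ _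
      _ ≤ h k + (δ + h k) := by
          refine add_le_add (le_of_eq ?_) ((hbd k).symm.le.trans' (le_of_eq rfl) |>.trans (hlip k))
          rw [dist_eq_norm]
          simp [norm_smul, hunorm, abs_of_pos (h0 k)]
      _ = δ + 2 * h k := by ring
  have hbmem : ∀ k, b k ∈ Metric.closedBall z (δ + 2) := by
    intro k
    rw [Metric.mem_closedBall, dist_comm]
    calc dist z (b k) ≤ δ + 2 * h k := hub k
      _ ≤ δ + 2 := by
          have h1 : h k ≤ 1 := by
            refine (hlt k).le.trans ?_
            rw [div_le_one (by positivity)]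
            simp
          linarith
  obtain ⟨c, hcmem, φ, hφ, hbc⟩ := (isCompact_closedBall z (δ + 2)).tendsto_subseq hbmem
  have hhφ : Filter.Tendsto (fun k => h (φ k)) Filter.atTop (nhds 0) :=
    hh0.comp hφ.tendsto_atTop
  -- c ∈ A and dist z c = δ, hence c = a
  have hcA : c ∈ A := hAc.mem_of_tendsto hbc (Filter.Eventually.of_forall fun k => hbA (φ k))
  have hdzc : dist z c = δ := by
    have h1 : Filter.Tendsto (fun k => dist z (b (φ k))) Filter.atTop (nhds (dist z c)) :=
      (Continuous.tendsto (continuous_const.dist continuous_id) c).comp hbc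
    have h2 : Filter.Tendsto (fun k => δ + 2 * h (φ k)) Filter.atTop (nhds δ) := by
      have := (hhφ.const_mul 2).const_add δ
      simpa using this
    have hle : dist z c ≤ δ := le_of_tendsto_of_tendsto' h1 h2 fun k => hub (φ k)
    have hge : δ ≤ dist z c := le_of_tendsto_of_tendsto' tendsto_const_nhds h1 fun k => hlb (φ k)
    linarith
  have hca : c = a := by
    obtain ⟨a₀, ha₀, huniq⟩ := hzU
    rw [huniq c ⟨hcA, hdzc⟩, huniq a ⟨ha, had⟩]
  -- the unit vectors towards z converge to u
  have hwz : ∀ k, (z - b k) ≠ 0 := by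
    intro k hk
    have := hlb k
    rw [dist_eq_norm, hk, norm_zero] at this
    linarith
  set w : ℕ → EuclideanSpace ℝ (Fin n) := fun k => ‖z - b k‖⁻¹ • (z - b k) with hw
  have hwtend : Filter.Tendsto (fun k => (⟪u, w (φ k)⟫ : ℝ)) Filter.atTop (nhds 1) := by
    have h1 : Filter.Tendsto (fun k => z - b (φ k)) Filter.atTop (nhds (z - a)) := by
      have := Filter.Tendsto.const_sub z hbc
      simpa [hca, Function.comp] using this
    have h2 : Filter.Tendsto (fun k => w (φ k)) Filter.atTop (nhds u) := by
      have hn : Filter.Tendsto (fun k => ‖z - b (φ k)‖⁻¹) Filter.atTop (nhds ‖z - a‖⁻¹) :=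
        (h1.norm).inv₀ (by rw [hza]; exact hpos.ne')
      have := hn.smul h1
      rw [hu, ← hza]
      exact this
    have h3 : Filter.Tendsto (fun k => (⟪u, w (φ k)⟫ : ℝ)) Filter.atTop (nhds ⟪u, u⟫) :=
      (Continuous.tendsto (continuous_const.inner continuous_id) u).comp h2
    have : (⟪u, u⟫ : ℝ) = 1 := by
      rw [real_inner_self_eq_norm_sq, hunorm]; norm_num
    rwa [this] at h3
  -- key lower bound
  have hkey : ∀ k, δ + h k * ⟪u, w k⟫ ≤ Metric.infDist (z + h k • u) A := by
    intro k
    rw [hbd k]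
    have hwn : ‖w k‖ = 1 := norm_smul_inv_norm (hwz k)
    have e1 : dist (z + h k • u) (b k) = ‖(z - b k) + h k • u‖ := by
      rw [dist_eq_norm, show z + h k • u - b k = (z - b k) + h k • u by abel]
    have hNe : ‖z - b k‖ ≠ 0 := fun hh => (hwz k) (norm_eq_zero.mp hh)
    have e2 : (⟪(z - b k) + h k • u, w k⟫ : ℝ) = ‖z - b k‖ + h k * ⟪u, w k⟫ := by
      have e2a : (⟪(z - b k), w k⟫ : ℝ) = ‖z - b k‖ := by
        simp only [hw]
        rw [real_inner_smul_right, real_inner_self_eq_norm_sq, sq, inv_mul_cancel_left₀ hNe]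
      rw [inner_add_left, e2a, real_inner_smul_left]
    have e3 : (⟪(z - b k) + h k • u, w k⟫ : ℝ) ≤ ‖(z - b k) + h k • u‖ := by
      calc (⟪(z - b k) + h k • u, w k⟫ : ℝ) ≤ ‖(z - b k) + h k • u‖ * ‖w k‖ :=
            real_inner_le_norm _ _
        _ = ‖(z - b k) + h k • u‖ := by rw [hwn, mul_one]
    have e4 : δ + h k * ⟪u, w k⟫ ≤ ‖z - b k‖ + h k * ⟪u, w k⟫ := by
      have : δ ≤ ‖z - b k‖ := by rw [← dist_eq_norm]; exact hlb k
      linarith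
    rw [e1]
    calc δ + h k * ⟪u, w k⟫ ≤ ‖z - b k‖ + h k * ⟪u, w k⟫ := e4
      _ = ⟪(z - b k) + h k • u, w k⟫ := e2.symm
      _ ≤ ‖(z - b k) + h k • u‖ := e3
  -- contradiction
  have hsmall : ∀ k, (⟪u, w (φ k)⟫ : ℝ) < 1 - ε := by
    intro k
    have h1 := hkey (φ k)
    have h2 := hbad (φ k)
    have h3 := h0 (φ k)
    nlinarith
  have : (1 : ℝ) ≤ 1 - ε := by
    have := le_of_tendsto hwtend (Filter.Eventually.of_forall fun k => (hsmall k).le)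
    linarith
  linarith


set_option maxHeartbeats 1000000 in
/-- Federer: if `T = {t > 0 : x + tv ∈ Unp(A), p_A(x + tv) = x}` is nonempty and bounded
above with supremum `τ`, then `x + τv` is not in the interior of `Unp(A)`. -/
theorem stmt_7 {n : ℕ} (A : Set (EuclideanSpace ℝ (Fin n)))
    (hA : A.Nonempty) (hAc : IsClosed A)
    (x : EuclideanSpace ℝ (Fin n)) (hx : x ∈ A) (v : EuclideanSpace ℝ (Fin n))
    (T : Set ℝ)
    (hT : T = {t : ℝ | 0 < t ∧ x + t • v ∈ Unp A ∧
      dist (x + t • v) x = Metric.infDist (x + t • v) A})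
    (hTne : T.Nonempty) (hTbdd : BddAbove T)
    (τ : ℝ) (hτ : τ = sSup T) :
    x + τ • v ∉ interior (Unp A) := by
  intro hy
  obtain ⟨t₀, ht₀T⟩ := hTne
  have ht₀ : 0 < t₀ ∧ x + t₀ • v ∈ Unp A ∧
      dist (x + t₀ • v) x = Metric.infDist (x + t₀ • v) A := by
    rw [hT] at ht₀T; exact ht₀T
  have hτt₀ : t₀ ≤ τ := hτ ▸ le_csSup hTbdd ht₀T
  have hτpos : 0 < τ := lt_of_lt_of_le ht₀.1 hτt₀
  -- v ≠ 0
  have hv : v ≠ 0 := by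
    intro hv0
    have hall : ∀ t : ℝ, 0 < t → t ∈ T := by
      intro t ht
      rw [hT]
      refine ⟨ht, ?_, ?_⟩
      · have := ht₀.2.1; simpa [hv0] using this
      · have := ht₀.2.2; simpa [hv0] using this
    obtain ⟨c, hc⟩ := hTbdd
    have h1 : max c 0 + 1 ≤ c := hc (hall _ (by positivity))
    have h2 : c ≤ max c 0 := le_max_left _ _
    linarith
  set y := x + τ • v with hy_def
  set d := τ * ‖v‖ with hd_def
  have hd0 : 0 < d := mul_pos hτpos (norm_pos_iff.mpr hv)
  have hdist : dist y x = d := by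
    rw [hy_def, dist_eq_norm, add_sub_cancel_left, norm_smul, Real.norm_eq_abs,
      abs_of_pos hτpos]
  -- infDist y A = d
  have hyinf : Metric.infDist y A = d := by
    set g : ℝ → ℝ := fun t => Metric.infDist (x + t • v) A - t * ‖v‖ with hg
    have hgcont : Continuous g := by
      apply Continuous.sub
      · exact (Metric.continuous_infDist_pt A).comp
          (continuous_const.add (continuous_id.smul continuous_const))
      · exact continuous_id.mul continuous_const
    have hTsub : T ⊆ g ⁻¹' {0} := by
      intro t htT
      rw [hT] at htT
      obtain ⟨htpos, _, hteq⟩ := htT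
      have : dist (x + t • v) x = t * ‖v‖ := by
        rw [dist_eq_norm, add_sub_cancel_left, norm_smul, Real.norm_eq_abs, abs_of_pos htpos]
      simp only [Set.mem_preimage, Set.mem_singleton_iff, hg]
      rw [← hteq, this]
      ring
    have hclosure : τ ∈ closure T := hτ ▸ csSup_mem_closure ⟨t₀, ht₀T⟩ hTbdd
    have : τ ∈ g ⁻¹' {0} :=
      (IsClosed.closure_subset_iff (isClosed_singleton.preimage hgcont)).mpr
        hTsub hclosure
    simp only [Set.mem_preimage, Set.mem_singleton_iff, hg] at this
    rw [← hy_def] at this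
    linarith [this]
  have hyU : y ∈ Unp A := interior_subset hy
  -- a ball inside Unp
  obtain ⟨R, hR0, hRsub⟩ := Metric.mem_nhds_iff.mp (mem_interior_iff_mem_nhds.mp hy)
  set r := R / 2 with hr_def
  have hr0 : 0 < r := by positivity
  have hballU : ∀ t : ℝ, t ≤ r → Metric.closedBall y t ⊆ Unp A := by
    intro t ht z hz
    apply hRsub
    rw [Metric.mem_ball]
    calc dist z y ≤ t := Metric.mem_closedBall.mp hz
      _ ≤ r := ht
      _ < R := by rw [hr_def]; linarith
  set D : EuclideanSpace ℝ (Fin n) → ℝ := fun z => Metric.infDist z A with hD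
  set M : ℝ → ℝ := fun t => sSup (D '' Metric.closedBall y t) with hM
  have hDy : D y = d := hyinf
  have hbdd : ∀ t : ℝ, BddAbove (D '' Metric.closedBall y t) := by
    intro t
    refine ⟨d + max t 0, ?_⟩
    rintro _ ⟨z, hz, rfl⟩
    calc D z ≤ D y + dist z y := Metric.infDist_le_infDist_add_dist
      _ ≤ d + max t 0 := by
          rw [hDy]
          have := Metric.mem_closedBall.mp hz
          gcongr
          exact this.trans (le_max_left _ _)
  have himne : ∀ t : ℝ, 0 ≤ t → (D '' Metric.closedBall y t).Nonempty :=
    fun t ht => ⟨D y, ⟨y, Metric.mem_closedBall_self ht, rfl⟩⟩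
  have hmax : ∀ t : ℝ, 0 ≤ t → ∃ z ∈ Metric.closedBall y t,
      ∀ w ∈ Metric.closedBall y t, D w ≤ D z := by
    intro t ht
    obtain ⟨z, hz, hzmax⟩ := (isCompact_closedBall y t).exists_isMaxOn
      ⟨y, Metric.mem_closedBall_self ht⟩ ((Metric.continuous_infDist_pt A).continuousOn)
    exact ⟨z, hz, fun w hw => hzmax hw⟩
  have hMeq : ∀ t : ℝ, 0 ≤ t → ∀ z ∈ Metric.closedBall y t,
      (∀ w ∈ Metric.closedBall y t, D w ≤ D z) → M t = D z := by
    intro t ht z hz hzmax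
    refine le_antisymm (csSup_le (himne t ht) ?_) (le_csSup (hbdd t) ⟨z, hz, rfl⟩)
    rintro _ ⟨w, hw, rfl⟩
    exact hzmax w hw
  have hMy : ∀ t : ℝ, 0 ≤ t → d ≤ M t :=
    fun t ht => hDy ▸ le_csSup (hbdd t) ⟨y, Metric.mem_closedBall_self ht, rfl⟩
  have hMle : ∀ s t : ℝ, 0 ≤ s → s ≤ t → M s ≤ M t := by
    intro s t hs hst
    refine csSup_le (himne s hs) ?_
    rintro _ ⟨z, hz, rfl⟩
    exact le_csSup (hbdd t) ⟨z, (Metric.closedBall_subset_closedBall hst) hz, rfl⟩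
  have hMlip : ∀ s t : ℝ, 0 ≤ s → s ≤ t → M t ≤ M s + (t - s) := by
    intro s t hs hst
    rcases eq_or_lt_of_le (hs.trans hst) with ht0 | ht0
    · -- t = 0 hence s = 0
      have hs0 : s = 0 := le_antisymm (hst.trans ht0.symm.le) hs
      rw [← ht0, hs0]; simp
    refine csSup_le (himne t (hs.trans hst)) ?_
    rintro _ ⟨z, hz, rfl⟩
    set z' := y + (s / t) • (z - y) with hz'
    have hst' : 0 ≤ s / t := div_nonneg hs ht0.le
    have hst'' : s / t ≤ 1 := (div_le_one ht0).mpr hst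
    have hzy : ‖z - y‖ ≤ t := by rw [← dist_eq_norm]; exact Metric.mem_closedBall.mp hz
    have hz'mem : z' ∈ Metric.closedBall y s := by
      rw [Metric.mem_closedBall, dist_eq_norm, hz', add_sub_cancel_left, norm_smul,
        Real.norm_eq_abs, abs_of_nonneg hst']
      calc s / t * ‖z - y‖ ≤ s / t * t := by gcongr
        _ = s := by field_simp
    have hdzz' : dist z z' ≤ t - s := by
      rw [dist_eq_norm, hz', show z - (y + (s / t) • (z - y)) = (1 - s / t) • (z - y) by
        rw [sub_smul, one_smul]; abel, norm_smul, Real.norm_eq_abs,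
        abs_of_nonneg (by linarith)]
      calc (1 - s / t) * ‖z - y‖ ≤ (1 - s / t) * t := by gcongr <;> linarith
        _ = t - s := by rw [sub_mul, one_mul, div_mul_cancel₀ _ ht0.ne']
    calc D z ≤ D z' + dist z z' := Metric.infDist_le_infDist_add_dist
      _ ≤ M s + (t - s) := add_le_add (le_csSup (hbdd s) ⟨z', hz'mem, rfl⟩) hdzz'
  have hMcont : ContinuousOn M (Set.Icc 0 r) := by
    have habs : ∀ s t : ℝ, 0 ≤ s → 0 ≤ t → |M s - M t| ≤ |s - t| := by
      intro s t hs ht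
      rcases le_total s t with hst | hst
      · rw [abs_of_nonpos (by linarith [hMle s t hs hst]), abs_of_nonpos (by linarith)]
        linarith [hMlip s t hs hst]
      · rw [abs_of_nonneg (by linarith [hMle t s ht hst]), abs_of_nonneg (by linarith)]
        linarith [hMlip t s ht hst]
    have : LipschitzOnWith 1 M (Set.Ici 0) := by
      refine LipschitzOnWith.of_dist_le_mul ?_
      intro s hs t ht
      rw [Real.dist_eq, Real.dist_eq]
      simpa using habs s t hs ht
    exact (this.continuousOn).mono (fun w hw => hw.1)
  -- Dini derivative argument: M t ≥ d + t on [0, r]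
  have key : ∀ t ∈ Set.Icc (0:ℝ) r, d + t - M t ≤ 0 := by
    have dini : ∀ ε : ℝ, 0 < ε → ∀ t ∈ Set.Icc (0:ℝ) r, d + t - M t ≤ ε * t := by
      intro ε hε
      have hcontf : ContinuousOn (fun t => d + t - M t) (Set.Icc 0 r) :=
        ((continuousOn_const.add continuousOn_id).sub hMcont)
      have hslope : ∀ t ∈ Set.Ico (0:ℝ) r, ∀ q : ℝ, (0:ℝ) < q →
          ∃ᶠ s in nhdsWithin t (Set.Ioi t), slope (fun t => d + t - M t) t s < q := by
        intro t ht q hq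
        obtain ⟨z, hzmem, hzmax⟩ := hmax t ht.1
        have hzU : z ∈ Unp A := hballU t ht.2.le hzmem
        have hMt : M t = D z := hMeq t ht.1 z hzmem hzmax
        have hDz : 0 < Metric.infDist z A := by
          have : d ≤ M t := hMy t ht.1
          rw [hMt] at this
          exact lt_of_lt_of_le hd0 this
        obtain ⟨az, ⟨hazA, hazd⟩, -⟩ := id hzU
        obtain ⟨h₀, hh₀, hkey⟩ := slope_aux hA hAc hzU hazA hazd hDz (half_pos hq)
        refine Filter.Eventually.frequently ?_
        have hmem : Set.Ioo t (t + min h₀ 1) ∈ nhdsWithin t (Set.Ioi t) :=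
          Ioo_mem_nhdsGT_of_mem ⟨le_refl _, by
            have : (0:ℝ) < min h₀ 1 := lt_min hh₀ one_pos
            linarith⟩
        refine Filter.eventually_of_mem hmem ?_
        intro s hs
        have hh : 0 < s - t := by linarith [hs.1]
        have hh' : s - t < h₀ := by
          have h1 := hs.2
          have h2 : (min h₀ 1 : ℝ) ≤ h₀ := min_le_left _ _
          linarith
        set u : EuclideanSpace ℝ (Fin n) :=
          (Metric.infDist z A)⁻¹ • (z - az) with hu
        have hzu : z + (s - t) • u ∈ Metric.closedBall y s := by
          rw [Metric.mem_closedBall]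
          have hun : ‖u‖ = 1 := by
            rw [hu, norm_smul, Real.norm_eq_abs, abs_inv, abs_of_pos hDz]
            rw [show ‖z - az‖ = Metric.infDist z A by rw [← dist_eq_norm]; exact hazd]
            exact inv_mul_cancel₀ hDz.ne'
          calc dist (z + (s - t) • u) y ≤ dist (z + (s - t) • u) z + dist z y :=
                dist_triangle _ _ _
            _ ≤ (s - t) + t := by
                refine add_le_add (le_of_eq ?_) (Metric.mem_closedBall.mp hzmem)
                rw [dist_eq_norm, add_sub_cancel_left, norm_smul, hun, mul_one,
                  Real.norm_eq_abs, abs_of_pos hh]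
            _ = s := by ring
        have hMs : M t + (s - t) * (1 - q / 2) ≤ M s := by
          have h1 := hkey (s - t) hh hh'
          have h2 : Metric.infDist (z + (s - t) • u) A ≤ M s :=
            le_csSup (hbdd s) ⟨z + (s - t) • u, hzu, rfl⟩
          rw [hMt]
          calc D z + (s - t) * (1 - q / 2) ≤ Metric.infDist (z + (s - t) • u) A := h1
            _ ≤ M s := h2
        rw [slope_def_field, div_lt_iff₀ hh]
        nlinarith
      have ha0 : d + 0 - M 0 ≤ ε * 0 := by
        have := hMy 0 le_rfl
        simp only [mul_zero, add_zero]
        linarith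
      have hB : ∀ s : ℝ, HasDerivAt (fun t => ε * t) ε s := by
        intro s
        simpa using (hasDerivAt_id s).const_mul ε
      exact fun t htI => image_le_of_liminf_slope_right_lt_deriv_boundary
        hcontf hslope ha0 hB (fun s _ _ => hε) htI
    intro t htI
    have ht1 : 0 ≤ t := htI.1
    by_contra hcon
    push_neg at hcon
    have hc : 0 < d + t - M t := hcon
    have h2 := dini ((d + t - M t) / (2 * (t + 1))) (by positivity) t htI
    have h3 : ((d + t - M t) / (2 * (t + 1))) * t < d + t - M t := by
      rw [div_mul_eq_mul_div, div_lt_iff₀ (by positivity)]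
      nlinarith
    linarith
  -- conclusion
  obtain ⟨z, hzmem, hzmax⟩ := hmax r hr0.le
  have hMr : M r = D z := hMeq r hr0.le z hzmem hzmax
  have hDzlb : d + r ≤ D z := by
    have := key r ⟨hr0.le, le_refl r⟩
    rw [hMr] at this
    linarith
  have hzx : D z ≤ dist z x := Metric.infDist_le_dist_of_mem hx
  have hzy : dist z y ≤ r := Metric.mem_closedBall.mp hzmem
  have hxy : dist z x ≤ dist z y + d := by
    calc dist z x ≤ dist z y + dist y x := dist_triangle _ _ _
      _ = dist z y + d := by rw [hdist]
  have hdzy : dist z y = r := by linarith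
  have hdzx : dist z x = d + r := by linarith
  have htri : dist x y + dist y z = dist x z := by
    rw [dist_comm x y, dist_comm y z, dist_comm x z, hdist, hdzy, hdzx]
  have hbtw : Wbtw ℝ x y z := dist_add_dist_eq_iff.mp htri
  obtain ⟨p, q, hp, hq, hpq, hcomb⟩ := hbtw.mem_segment
  have hyx : y - x = q • (z - x) := by
    have : p • x + q • z = y := hcomb
    rw [← this]
    have hp1 : p = 1 - q := by linarith
    rw [hp1, sub_smul, one_smul, smul_sub]
    abel
  have hqval : d = q * (d + r) := by
    have h1 : ‖y - x‖ = q * ‖z - x‖ := by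
      rw [hyx, norm_smul, Real.norm_eq_abs, abs_of_nonneg hq]
    rw [← dist_eq_norm, ← dist_eq_norm] at h1
    rw [hdist, hdzx] at h1
    exact h1
  have hq0 : 0 < q := by
    rcases lt_or_eq_of_le hq with h | h
    · exact h
    · exfalso; rw [← h] at hqval; simp at hqval; linarith
  set t' := q⁻¹ * τ with ht'_def
  have hzeq : x + t' • v = z := by
    have h1 : q • (z - x) = τ • v := by
      rw [← hyx, hy_def]; abel
    have h2 : z - x = (q⁻¹ * τ) • v := by
      rw [mul_smul, ← h1, smul_smul, inv_mul_cancel₀ hq0.ne', one_smul]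
    rw [ht'_def, ← h2]; abel
  have ht'T : t' ∈ T := by
    rw [hT]
    refine ⟨by positivity, ?_, ?_⟩
    · rw [hzeq]; exact hballU r le_rfl hzmem
    · rw [hzeq, hdzx]
      have : Metric.infDist z A = d + r := le_antisymm (hzx.trans_eq hdzx) hDzlb
      rw [this]
  have ht'le : t' ≤ τ := hτ ▸ le_csSup hTbdd ht'T
  have ht'pos : 0 < t' := by rw [ht'_def]; positivity
  have hqt' : q * t' = τ := by
    rw [ht'_def, ← mul_assoc, mul_inv_cancel₀ hq0.ne', one_mul]
  have hq1 : q < 1 := by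
    have h1 : q * (d + r) < 1 * (d + r) := by rw [one_mul]; linarith
    exact lt_of_mul_lt_mul_right h1 (by linarith)
  have h2 : q * t' < 1 * t' := mul_lt_mul_of_pos_right hq1 ht'pos
  rw [one_mul] at h2
  linarith
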